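/- The map Φ_ω : Sⁿ⁻¹ × ℝ_{≥0} → ℝⁿ, (x̄,τ) ↦ (τ^{ω₁}x̄₁, ..., τ^{ωₙ}x̄ₙ), restricted to Sⁿ⁻¹ × ℝ_{>0}, is a bijection onto ℝⁿ \ {0}. -/

import Mathlib

/-- Helper: if two points of the sphere-cylinder map to the same point, the radii
cannot satisfy `τ < σ`. -/
lemma blowup_aux (n : ℕ) (ω : Fin n → ℕ) (hω : ∀ i, 0 < ω i)
    (x x' : Fin n → ℝ) (τ σ : ℝ) (hx : (∑ i, x i ^ 2) = 1) (hx' : (∑ i, x' i ^ 2) = 1)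
    (hτ : 0 < τ) (hσ : 0 < σ) (hlt : τ < σ)
    (heq : ∀ i, τ ^ ω i * x i = σ ^ ω i * x' i) : False := by
  set r : ℝ := τ / σ with hr
  have hr0 : 0 < r := div_pos hτ hσ
  have hr1 : r < 1 := (div_lt_one hσ).mpr hlt
  have hcomp : ∀ i, x' i = r ^ ω i * x i := by
    intro i
    have hσn : (σ : ℝ) ^ ω i ≠ 0 := pow_ne_zero _ (ne_of_gt hσ)
    have := heq i
    rw [hr, div_pow, div_mul_eq_mul_div, eq_div_iff hσn]
    nlinarith [this]
  -- some x i is nonzero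
  have hex : ∃ i, x i ≠ 0 := by
    by_contra h
    push_neg at h
    simp [h] at hx
  obtain ⟨i0, hi0⟩ := hex
  have hmem : i0 ∈ Finset.univ := Finset.mem_univ _
  have hlt' : (∑ i, x' i ^ 2) < ∑ i, x i ^ 2 := by
    apply Finset.sum_lt_sum
    · intro i _
      rw [hcomp i, mul_pow]
      have h1 : (r ^ ω i) ^ 2 ≤ 1 := by
        have : r ^ ω i ≤ 1 := pow_le_one₀ (le_of_lt hr0) (le_of_lt hr1)
        nlinarith [pow_pos hr0 (ω i)]
      nlinarith [sq_nonneg (x i)]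
    · refine ⟨i0, hmem, ?_⟩
      rw [hcomp i0, mul_pow]
      have h1 : (r ^ ω i0) ^ 2 < 1 := by
        have h2 : r ^ ω i0 < 1 := pow_lt_one₀ (le_of_lt hr0) hr1 (hω i0).ne'
        nlinarith [pow_pos hr0 (ω i0)]
      have h3 : 0 < x i0 ^ 2 := by positivity
      nlinarith
  rw [hx, hx'] at hlt'
  exact lt_irrefl 1 hlt'

/-- The weighted blow-up map `Φ_ω(x̄,τ) = (τ^{ω₁}x̄₁, ..., τ^{ωₙ}x̄ₙ)`, restricted to
`Sⁿ⁻¹ × ℝ_{>0}`, is a bijection onto `ℝⁿ \ {0}`. -/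
theorem blowup_bijOn
    (n : ℕ) (ω : Fin n → ℕ) (hω : ∀ i, 0 < ω i) :
    Set.BijOn (fun p : (Fin n → ℝ) × ℝ => fun i => p.2 ^ ω i * p.1 i)
      {p : (Fin n → ℝ) × ℝ | (∑ i, p.1 i ^ 2) = 1 ∧ 0 < p.2}
      {y : Fin n → ℝ | y ≠ 0} := by
  refine ⟨?_, ?_, ?_⟩
  · -- MapsTo
    rintro ⟨x, τ⟩ ⟨hsum, hτ⟩
    simp only [Set.mem_setOf_eq]
    intro h0
    have hzero : ∀ i, x i = 0 := by
      intro i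
      have := congrFun h0 i
      simp only [Pi.zero_apply] at this
      have hτn : τ ^ ω i ≠ 0 := pow_ne_zero _ (ne_of_gt hτ)
      exact (mul_eq_zero.mp this).resolve_left hτn
    simp [hzero] at hsum
  · -- InjOn
    rintro ⟨x, τ⟩ ⟨hx, hτ⟩ ⟨x', σ⟩ ⟨hx', hσ⟩ heq
    simp only at heq
    have heq' : ∀ i, τ ^ ω i * x i = σ ^ ω i * x' i := fun i => congrFun heq i
    have hτσ : τ = σ := by
      rcases lt_trichotomy τ σ with h | h | h
      · exact absurd (blowup_aux n ω hω x x' τ σ hx hx' hτ hσ h heq') (fun h => h.elim)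
      · exact h
      · exact absurd (blowup_aux n ω hω x' x σ τ hx' hx hσ hτ h
          (fun i => (heq' i).symm)) (fun h => h.elim)
    subst hτσ
    have hxx : x = x' := by
      funext i
      have hτn : τ ^ ω i ≠ 0 := pow_ne_zero _ (ne_of_gt hτ)
      exact mul_left_cancel₀ hτn (heq' i)
    rw [hxx]
  · -- SurjOn
    intro y hy
    simp only [Set.mem_setOf_eq] at hy
    obtain ⟨i0, hi0⟩ : ∃ i, y i ≠ 0 := Function.ne_iff.mp hy
    set M : ℝ := max 1 (1 / (y i0) ^ 2) with hM
    have hM1 : (1 : ℝ) ≤ M := le_max_left _ _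
    have hM2 : 1 / (y i0) ^ 2 ≤ M := le_max_right _ _
    have hy2 : 0 < (y i0) ^ 2 := by positivity
    set g : ℝ → ℝ := fun t => ∑ i, (y i * t ^ ω i) ^ 2 with hg
    have hgc : Continuous g := by
      apply continuous_finset_sum
      intro i _
      continuity
    have hg0 : g 0 = 0 := by
      simp [hg, zero_pow (hω _).ne']
    have hgM : 1 ≤ g M := by
      have hterm : (y i0 * M ^ ω i0) ^ 2 ≤ g M :=
        Finset.single_le_sum (f := fun i => (y i * M ^ ω i) ^ 2)
          (fun i _ => sq_nonneg _) (Finset.mem_univ i0)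
      have hMpow : M ≤ M ^ ω i0 := le_self_pow₀ hM1 (hω i0).ne'
      have hMpow1 : 1 ≤ M ^ ω i0 := one_le_pow₀ hM1
      have h1 : (y i0) ^ 2 * M ≤ (y i0 * M ^ ω i0) ^ 2 := by
        rw [mul_pow]
        have : M ≤ (M ^ ω i0) ^ 2 := by nlinarith
        nlinarith
      have h2 : 1 ≤ (y i0) ^ 2 * M := by
        rw [div_le_iff₀ hy2] at hM2
        linarith [hM2]
      linarith
    obtain ⟨t, ht, hgt⟩ : ∃ t ∈ Set.Icc (0 : ℝ) M, g t = 1 := by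
      have h01 : (1 : ℝ) ∈ Set.Icc (g 0) (g M) := by
        rw [hg0]; exact ⟨zero_le_one, hgM⟩
      have := intermediate_value_Icc (le_trans zero_le_one hM1) hgc.continuousOn h01
      obtain ⟨t, ht, hgt⟩ := this
      exact ⟨t, ht, hgt⟩
    have htpos : 0 < t := by
      rcases lt_or_eq_of_le ht.1 with h | h
      · exact h
      · exfalso; rw [← h] at hgt; rw [hg0] at hgt; linarith
    have htn : t ≠ 0 := ne_of_gt htpos
    refine ⟨(fun i => y i * t ^ ω i, t⁻¹), ⟨?_, by positivity⟩, ?_⟩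
    · exact hgt
    · funext i
      simp only
      rw [inv_pow]
      field_simp
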